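/- Define F(x,y,z) = tanh(x)·tanh(y) − tanh(z/√2). Then for every (x,y,z) ∈ ℝ³ with F(x,y,z) = 0, E[F](x,y,z) = 0; that is, the surface {tanh x · tanh y = tanh(z/√2)} has zero mean curvature in Lorentz–Minkowski space. -/

import Mathlib

/-- Partial derivative with respect to the first variable. -/
noncomputable def px (F : ℝ → ℝ → ℝ → ℝ) (x y z : ℝ) : ℝ := deriv (fun t => F t y z) x

/-- Partial derivative with respect to the second variable. -/
noncomputable def py (F : ℝ → ℝ → ℝ → ℝ) (x y z : ℝ) : ℝ := deriv (fun t => F x t z) y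

/-- Partial derivative with respect to the third variable. -/
noncomputable def pz (F : ℝ → ℝ → ℝ → ℝ) (x y z : ℝ) : ℝ := deriv (fun t => F x y t) z

/-- The zero mean curvature expression `E[F]` for a level surface `{F = 0}` in
Lorentz–Minkowski space `𝕃³ = (ℝ³, dx² + dy² − dz²)`:
`E[F] = −(F_x² + F_y² − F_z²)(F_xx + F_yy − F_zz) + F_x²F_xx + F_y²F_yy + F_z²F_zz
        + 2F_xF_yF_xy − 2F_xF_zF_xz − 2F_yF_zF_yz`. -/
noncomputable def Eop (F : ℝ → ℝ → ℝ → ℝ) (x y z : ℝ) : ℝ :=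
  -(px F x y z ^ 2 + py F x y z ^ 2 - pz F x y z ^ 2) *
      (px (px F) x y z + py (py F) x y z - pz (pz F) x y z)
    + px F x y z ^ 2 * px (px F) x y z
    + py F x y z ^ 2 * py (py F) x y z
    + pz F x y z ^ 2 * pz (pz F) x y z
    + 2 * px F x y z * py F x y z * py (px F) x y z
    - 2 * px F x y z * pz F x y z * pz (px F) x y z
    - 2 * py F x y z * pz F x y z * pz (py F) x y z

lemma tanh_hasDerivAt (x : ℝ) : HasDerivAt Real.tanh (1 - Real.tanh x ^ 2) x := by
  have hc : Real.cosh x ≠ 0 := (Real.cosh_pos x).ne'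
  have h := (Real.hasDerivAt_sinh x).div (Real.hasDerivAt_cosh x) hc
  have hfun : (Real.sinh / Real.cosh) = Real.tanh := by
    funext t; rw [Real.tanh_eq_sinh_div_cosh]; rfl
  rw [hfun] at h
  refine h.congr_deriv ?_; symm
  rw [Real.tanh_eq_sinh_div_cosh]
  have hsq := Real.cosh_sq x
  field_simp

lemma tanh_comp_hasDerivAt (z : ℝ) :
    HasDerivAt (fun t => Real.tanh (t / Real.sqrt 2))
      ((1 - Real.tanh (z / Real.sqrt 2) ^ 2) / Real.sqrt 2) z := by
  have h := (tanh_hasDerivAt (z / Real.sqrt 2)).comp z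
    ((hasDerivAt_id z).div_const (Real.sqrt 2))
  simpa [div_eq_mul_inv, mul_comm, Function.comp_def] using h

/-- The surface `tanh x · tanh y = tanh(z/√2)` has zero mean curvature in
Lorentz–Minkowski space. -/
theorem stmt_17 (F : ℝ → ℝ → ℝ → ℝ)
    (hF : ∀ x y z : ℝ, F x y z =
      Real.tanh x * Real.tanh y - Real.tanh (z / Real.sqrt 2)) :
    ∀ x y z : ℝ, F x y z = 0 → Eop F x y z = 0 := by
  have hx : ∀ a b c : ℝ, px F a b c = (1 - Real.tanh a ^ 2) * Real.tanh b := by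
    intro a b c
    have hfun : (fun t => F t b c)
        = fun t => Real.tanh t * Real.tanh b - Real.tanh (c / Real.sqrt 2) := by
      funext t; exact hF t b c
    rw [px, hfun]
    exact (((tanh_hasDerivAt a).mul_const _).sub_const _).deriv
  have hy : ∀ a b c : ℝ, py F a b c = Real.tanh a * (1 - Real.tanh b ^ 2) := by
    intro a b c
    have hfun : (fun t => F a t c)
        = fun t => Real.tanh a * Real.tanh t - Real.tanh (c / Real.sqrt 2) := by
      funext t; exact hF a t c
    rw [py, hfun]
    exact (((tanh_hasDerivAt b).const_mul _).sub_const _).deriv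
  have hz : ∀ a b c : ℝ, pz F a b c
      = -((1 - Real.tanh (c / Real.sqrt 2) ^ 2) / Real.sqrt 2) := by
    intro a b c
    have hfun : (fun t => F a b t)
        = fun t => Real.tanh a * Real.tanh b - Real.tanh (t / Real.sqrt 2) := by
      funext t; exact hF a b t
    rw [pz, hfun]
    simpa using ((tanh_comp_hasDerivAt c).const_sub (Real.tanh a * Real.tanh b)).deriv
  intro x y z h0
  set A := Real.tanh x with hA
  set B := Real.tanh y with hB
  have hC : Real.tanh (z / Real.sqrt 2) = A * B := by
    have := hF x y z; rw [this] at h0; linarith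
  -- second partials
  have hxx : px (px F) x y z = -2 * A * (1 - A ^ 2) * B := by
    have hfun : (fun t => px F t y z) = fun t => (1 - Real.tanh t ^ 2) * Real.tanh y := by
      funext t; exact hx t y z
    rw [px, hfun]
    have h := ((((tanh_hasDerivAt x).pow 2).const_sub 1).mul_const (Real.tanh y)).deriv
    refine h.trans ?_; push_cast; ring
  have hyy : py (py F) x y z = A * (-2 * B * (1 - B ^ 2)) := by
    have hfun : (fun t => py F x t z) = fun t => Real.tanh x * (1 - Real.tanh t ^ 2) := by
      funext t; exact hy x t z
    rw [py, hfun]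
    have h := ((((tanh_hasDerivAt y).pow 2).const_sub 1).const_mul (Real.tanh x)).deriv
    refine h.trans ?_; push_cast; ring
  have hxy : py (px F) x y z = (1 - A ^ 2) * (1 - B ^ 2) := by
    have hfun : (fun t => px F x t z) = fun t => (1 - Real.tanh x ^ 2) * Real.tanh t := by
      funext t; exact hx x t z
    rw [py, hfun]
    have h := ((tanh_hasDerivAt y).const_mul (1 - Real.tanh x ^ 2)).deriv
    rw [h]
  have hxz : pz (px F) x y z = 0 := by
    have hfun : (fun t => px F x y t) = fun _ => (1 - Real.tanh x ^ 2) * Real.tanh y := by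
      funext t; exact hx x y t
    rw [pz, hfun, deriv_const]
  have hyz : pz (py F) x y z = 0 := by
    have hfun : (fun t => py F x y t) = fun _ => Real.tanh x * (1 - Real.tanh y ^ 2) := by
      funext t; exact hy x y t
    rw [pz, hfun, deriv_const]
  have hzz : pz (pz F) x y z
      = 2 * (A * B) * ((1 - (A * B) ^ 2) / Real.sqrt 2) / Real.sqrt 2 := by
    have hfun : (fun t => pz F x y t)
        = fun t => -((1 - Real.tanh (t / Real.sqrt 2) ^ 2) / Real.sqrt 2) := by
      funext t; exact hz x y t
    rw [pz, hfun]
    have h := (((((tanh_comp_hasDerivAt z).pow 2).const_sub 1)).div_const (Real.sqrt 2)).neg.deriv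
    refine h.trans ?_; rw [hC]; push_cast; ring
  have hu : ((Real.sqrt 2)⁻¹ : ℝ) ^ 2 = 1 / 2 := by
    rw [inv_pow, Real.sq_sqrt (by norm_num : (0:ℝ) ≤ 2)]; norm_num
  rw [Eop, hxx, hyy, hxy, hxz, hyz, hzz, hx, hy, hz, hC, ← hA, ← hB]
  simp only [div_eq_mul_inv]
  set u := ((Real.sqrt 2)⁻¹ : ℝ)
  linear_combination ((((1 - A ^ 2) * B) ^ 2 + (A * (1 - B ^ 2)) ^ 2) * (2 * A * B * (1 - (A * B) ^ 2))
    + (1 - (A * B) ^ 2) ^ 2 * (-2 * A * (1 - A ^ 2) * B - 2 * B * (1 - B ^ 2) * A)) * hu
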